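/- Let V be a finite-dimensional complex inner product space, let W : V → V be a Hermitian unitary operator (so W = W† and W² = I), let Π be an orthogonal projection on V, and define H = i(WΠ − ΠW). Suppose v is a unit vector with Πv = v and ΠWv = λv for a real number λ with |λ| < 1. Define v⊥ = (Wv − λv)/√(1−λ²). Then v⊥ is a unit vector orthogonal to v with Πv⊥ = 0, and the vectors Ψ± = (v ± i v⊥)/√2 are unit eigenvectors of H with eigenvalues ±√(1−λ²) respectively: H Ψ± = ±√(1−λ²) Ψ±. -/

import Mathlib

set_option maxHeartbeats 1000000 in
/-- Spectral structure of `H = i(WPr - PrW)` on an invariant subspace: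
if `W` is a Hermitian unitary, `Pr` an orthogonal projection, `Prv = v` and
`PrWv = λv` with `|λ| < 1`, then `v⊥ = (Wv - λv)/√(1-λ²)` is a unit vector
orthogonal to `v` with `Prv⊥ = 0`, and `Ψ± = (v ± i v⊥)/√2` are unit eigenvectors
of `H` with eigenvalues `±√(1-λ²)`. -/
theorem quantum_walk_hamiltonian_invariant_subspace_spectrum
    (V : Type*) [NormedAddCommGroup V] [InnerProductSpace ℂ V]
    [FiniteDimensional ℂ V]
    (W Pr : V →L[ℂ] V)
    (hWsa : IsSelfAdjoint W) (hWunit : W * W = 1)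
    (hPrsa : IsSelfAdjoint Pr) (hPridem : Pr * Pr = Pr)
    (H : V →L[ℂ] V) (hH : H = Complex.I • (W * Pr - Pr * W))
    (v : V) (hv : ‖v‖ = 1) (hPrv : Pr v = v)
    (lam : ℝ) (hlam : |lam| < 1) (hPrWv : Pr (W v) = (lam : ℂ) • v)
    (vperp : V)
    (hvperp : vperp = ((Real.sqrt (1 - lam ^ 2) : ℂ))⁻¹ • (W v - (lam : ℂ) • v))
    (Ψp Ψm : V)
    (hΨp : Ψp = ((Real.sqrt 2 : ℂ))⁻¹ • (v + Complex.I • vperp))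
    (hΨm : Ψm = ((Real.sqrt 2 : ℂ))⁻¹ • (v - Complex.I • vperp)) :
    ‖vperp‖ = 1 ∧ (inner ℂ v vperp : ℂ) = 0 ∧ Pr vperp = 0 ∧
    ‖Ψp‖ = 1 ∧ ‖Ψm‖ = 1 ∧
    H Ψp = ((Real.sqrt (1 - lam ^ 2) : ℝ) : ℂ) • Ψp ∧
    H Ψm = (-((Real.sqrt (1 - lam ^ 2) : ℝ) : ℂ)) • Ψm := by
  have hWsym := ContinuousLinearMap.isSelfAdjoint_iff_isSymmetric.mp hWsa
  have hPrsym := ContinuousLinearMap.isSelfAdjoint_iff_isSymmetric.mp hPrsa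
  have hWinner : ∀ x y : V, (inner ℂ (W x) y : ℂ) = inner ℂ x (W y) := fun x y => hWsym x y
  have hPrinner : ∀ x y : V, (inner ℂ (Pr x) y : ℂ) = inner ℂ x (Pr y) := fun x y => hPrsym x y
  set μ : ℝ := Real.sqrt (1 - lam ^ 2) with hμdef
  have hlam2 : lam ^ 2 < 1 := by
    have := abs_lt.mp hlam
    nlinarith [this.1, this.2]
  have hμ2 : μ ^ 2 = 1 - lam ^ 2 := Real.sq_sqrt (by linarith)
  have hμpos : 0 < μ := Real.sqrt_pos.mpr (by linarith)
  have hμne : (μ : ℂ) ≠ 0 := by exact_mod_cast ne_of_gt hμpos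
  have hμ2c : (μ : ℂ) * (μ : ℂ) = 1 - (lam : ℂ) * (lam : ℂ) := by
    calc (μ : ℂ) * (μ : ℂ) = ((μ ^ 2 : ℝ) : ℂ) := by push_cast; ring
    _ = ((1 - lam ^ 2 : ℝ) : ℂ) := by rw [hμ2]
    _ = 1 - (lam : ℂ) * (lam : ℂ) := by push_cast; ring
  have hWW : ∀ x : V, W (W x) = x := by
    intro x
    have := congrArg (fun T : V →L[ℂ] V => T x) hWunit
    simpa using this
  have hvv : (inner ℂ v v : ℂ) = 1 := by
    rw [inner_self_eq_norm_sq_to_K, hv]; norm_num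
  have hvWv : (inner ℂ v (W v) : ℂ) = (lam : ℂ) := by
    calc (inner ℂ v (W v) : ℂ) = inner ℂ (Pr v) (W v) := by rw [hPrv]
    _ = inner ℂ v (Pr (W v)) := hPrinner v (W v)
    _ = (lam : ℂ) := by rw [hPrWv, inner_smul_right, hvv]; ring
  have hWvv : (inner ℂ (W v) v : ℂ) = (lam : ℂ) := by
    rw [← inner_conj_symm, hvWv, Complex.conj_ofReal]
  have hWvWv : (inner ℂ (W v) (W v) : ℂ) = 1 := by
    rw [hWinner v (W v), hWW, hvv]
  -- inner v vperp = 0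
  have hinner_v_vperp : (inner ℂ v vperp : ℂ) = 0 := by
    rw [hvperp, inner_smul_right, inner_sub_right, inner_smul_right, hvWv, hvv]
    ring
  have hinner_vperp_v : (inner ℂ vperp v : ℂ) = 0 := by
    rw [← inner_conj_symm, hinner_v_vperp, map_zero]
  have hinner_vperp_vperp : (inner ℂ vperp vperp : ℂ) = 1 := by
    rw [hvperp]
    simp only [inner_smul_left, inner_smul_right, inner_sub_left, inner_sub_right,
      hWvWv, hvWv, hWvv, hvv, map_inv₀, Complex.conj_ofReal]
    field_simp
    linear_combination -hμ2c
  have hnorm_vperp : ‖vperp‖ = 1 := by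
    have h := hinner_vperp_vperp
    rw [inner_self_eq_norm_sq_to_K] at h
    have h2 : ‖vperp‖ ^ 2 = 1 := by
      have : ((‖vperp‖ ^ 2 : ℝ) : ℂ) = ((1 : ℝ) : ℂ) := by push_cast; exact h
      exact_mod_cast this
    nlinarith [norm_nonneg vperp]
  -- Pr vperp = 0
  have hPrvperp : Pr vperp = 0 := by
    rw [hvperp, map_smul, map_sub, map_smul, hPrWv, hPrv, sub_self, smul_zero]
  -- key vector identities
  have hWveq : W v = (lam : ℂ) • v + (μ : ℂ) • vperp := by
    rw [hvperp, smul_smul, mul_inv_cancel₀ hμne, one_smul]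
    module
  have hWvperp : W vperp = (μ : ℂ) • v - (lam : ℂ) • vperp := by
    rw [hvperp, map_smul, map_sub, map_smul, hWW, hWveq, hvperp]
    match_scalars
    · field_simp
      linear_combination (-1 : ℂ) * hμ2c
    · field_simp
  have hHv : H v = Complex.I • ((μ : ℂ) • vperp) := by
    rw [hH]
    simp only [ContinuousLinearMap.smul_apply, ContinuousLinearMap.sub_apply,
      ContinuousLinearMap.mul_apply]
    rw [hPrv, hPrWv, hWveq]
    congr 1
    module
  have hHvperp : H vperp = Complex.I • (-((μ : ℂ) • v)) := by
    rw [hH]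
    simp only [ContinuousLinearMap.smul_apply, ContinuousLinearMap.sub_apply,
      ContinuousLinearMap.mul_apply, hPrvperp, map_zero, hWvperp]
    rw [map_sub, map_smul, map_smul, hPrv, hPrvperp, smul_zero]
    congr 1
    module
  -- norms of Ψ±
  have hs2 : ((Real.sqrt 2 : ℝ) : ℂ) * ((Real.sqrt 2 : ℝ) : ℂ) = 2 := by
    have : Real.sqrt 2 * Real.sqrt 2 = 2 := Real.mul_self_sqrt (by norm_num)
    exact_mod_cast this
  have h2ne : ((Real.sqrt 2 : ℝ) : ℂ) ≠ 0 := by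
    intro h0
    rw [h0, mul_zero] at hs2
    norm_num at hs2
  have hnormΨ : ∀ (s : ℂ) (Ψ : V), Ψ = ((Real.sqrt 2 : ℂ))⁻¹ • (v + s • vperp) →
      (starRingEnd ℂ) s * s = 1 → ‖Ψ‖ = 1 := by
    intro s Ψ hΨ hs
    have hin : (inner ℂ Ψ Ψ : ℂ) = 1 := by
      rw [hΨ]
      simp only [inner_smul_left, inner_smul_right, inner_add_left, inner_add_right,
        hvv, hinner_v_vperp, hinner_vperp_v, hinner_vperp_vperp, map_inv₀,
        Complex.conj_ofReal, mul_zero, zero_mul, mul_one, add_zero, zero_add]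
      field_simp
      linear_combination hs - hs2
    rw [inner_self_eq_norm_sq_to_K] at hin
    have h2 : ‖Ψ‖ ^ 2 = 1 := by
      have : ((‖Ψ‖ ^ 2 : ℝ) : ℂ) = ((1 : ℝ) : ℂ) := by push_cast; exact hin
      exact_mod_cast this
    nlinarith [norm_nonneg Ψ]
  have hnΨp : ‖Ψp‖ = 1 := hnormΨ Complex.I Ψp hΨp (by simp [Complex.conj_I, Complex.I_mul_I])
  have hnΨm : ‖Ψm‖ = 1 := by
    refine hnormΨ (-Complex.I) Ψm ?_ (by simp [Complex.conj_I, Complex.I_mul_I])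
    rw [hΨm]; congr 1; rw [neg_smul]; module
  have hII : ∀ x : V, Complex.I • Complex.I • x = -x := by
    intro x
    rw [smul_smul, Complex.I_mul_I, neg_one_smul]
  have hHΨp : H Ψp = ((μ : ℝ) : ℂ) • Ψp := by
    rw [hΨp, map_smul, map_add, map_smul, hHv, hHvperp, hII (-((μ : ℂ) • v))]
    module
  have hHΨm : H Ψm = (-((μ : ℝ) : ℂ)) • Ψm := by
    rw [hΨm, map_smul, map_sub, map_smul, hHv, hHvperp, hII (-((μ : ℂ) • v))]
    module
  exact ⟨hnorm_vperp, hinner_v_vperp, hPrvperp, hnΨp, hnΨm, hHΨp, hHΨm⟩
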